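/- Let α > 0, t_0 < 0, and let (a_n)_{n≥1} be a sequence of strictly positive numbers with Σ_{n≥1} a_n² < ∞ satisfying c_n a_n a_{n+1} = a_n + c_{n−1} a_{n−1}² for all n ≥ 1 (with a_0 = 0), where c_n = 2^{αn}. Then X_n(t) := a_n/(t − t_0) defines a Leray solution of the unforced inviscid DN model on [0, ∞) whose energy Σ_{n≥1} X_n(t)² = (Σ_{n≥1} a_n²)/(t − t_0)² is strictly decreasing in t; in particular energy is not conserved (anomalous dissipation). -/

import Mathlib

open Set

namespace Stmt15

/-- Let `α > 0`, `t₀ < 0`, and let `(a_n)_{n≥1}` be strictly positive with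
`Σ_{n≥1} a_n² < ∞` and `c_n a_n a_{n+1} = a_n + c_{n−1} a_{n−1}²` for all `n ≥ 1` (with
`a_0 = 0`, `c_n = 2^(αn)`). Then `X_n(t) = a_n/(t − t₀)` is a Leray solution of the
unforced inviscid DN model on `[0, ∞)`, its energy equals `(Σ_{n≥1} a_n²)/(t − t₀)²` and
is strictly decreasing in `t`: energy is not conserved (anomalous dissipation). -/
theorem anomalous_dissipation (α t₀ : ℝ) (hα : 0 < α) (ht₀ : t₀ < 0)
    (a : ℕ → ℝ) (h0 : a 0 = 0) (hpos : ∀ n : ℕ, 1 ≤ n → 0 < a n)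
    (hsum : Summable fun n => (a (n + 1)) ^ 2)
    (hrec : ∀ n : ℕ, 1 ≤ n →
      (2 : ℝ) ^ (α * (n : ℝ)) * a n * a (n + 1)
        = a n + (2 : ℝ) ^ (α * ((n : ℝ) - 1)) * (a (n - 1)) ^ 2) :
    (∀ n : ℕ, 1 ≤ n → ∀ t ∈ Ici (0 : ℝ),
      HasDerivWithinAt (fun s => a n / (s - t₀))
        ((2 : ℝ) ^ (α * ((n : ℝ) - 1)) * (a (n - 1) / (t - t₀)) ^ 2
          - (2 : ℝ) ^ (α * (n : ℝ)) * (a n / (t - t₀)) * (a (n + 1) / (t - t₀)))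
        (Ici 0) t) ∧
    (∀ t ∈ Ici (0 : ℝ),
      (Summable fun n => (a (n + 1) / (t - t₀)) ^ 2) ∧
      (∑' n, (a (n + 1) / (t - t₀)) ^ 2) = (∑' n, (a (n + 1)) ^ 2) / (t - t₀) ^ 2) ∧
    StrictAntiOn (fun t => ∑' n, (a (n + 1) / (t - t₀)) ^ 2) (Ici (0 : ℝ)) ∧
    (∃ M : ℝ, ∀ t ∈ Ici (0 : ℝ), (∑' n, (a (n + 1) / (t - t₀)) ^ 2) ≤ M) := by
  have hne : ∀ t : ℝ, t ∈ Ici (0:ℝ) → t - t₀ ≠ 0 := by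
    intro t ht
    have : 0 < t - t₀ := by simp only [mem_Ici] at ht; linarith
    exact ne_of_gt this
  have hpos' : ∀ t : ℝ, t ∈ Ici (0:ℝ) → 0 < t - t₀ := by
    intro t ht; simp only [mem_Ici] at ht; linarith
  have hS : 0 < ∑' n, (a (n + 1)) ^ 2 := by
    have h1 : 0 < (a 1) ^ 2 := pow_pos (hpos 1 le_rfl) 2
    exact Summable.tsum_pos hsum (fun n => sq_nonneg _) 0 h1
  refine ⟨?_, ?_, ?_, ?_⟩
  · intro n hn t ht
    have hd : HasDerivWithinAt (fun s => a n / (s - t₀)) (-(a n) / (t - t₀)^2) (Ici 0) t := by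
      have h1 : HasDerivWithinAt (fun s : ℝ => s - t₀) 1 (Ici 0) t := by
        simpa using (hasDerivWithinAt_id t (Ici 0)).sub_const t₀
      have h2 := (hasDerivWithinAt_const t (Ici 0) (a n)).div h1 (hne t ht)
      convert h2 using 1
      all_goals first | rfl | ring
    convert hd using 1
    have key := hrec n hn
    have h2 : t - t₀ ≠ 0 := hne t ht
    have hd2 : (t - t₀) ^ 2 ≠ 0 := pow_ne_zero 2 h2
    field_simp
    linear_combination -key
  · intro t ht
    have heq : ∀ n : ℕ, (a (n + 1) / (t - t₀)) ^ 2 = (a (n + 1)) ^ 2 * ((1:ℝ) / (t - t₀)^2) := by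
      intro n; field_simp
    constructor
    · apply Summable.congr (hsum.mul_right ((1:ℝ) / (t - t₀)^2))
      intro n; rw [heq n]
    · calc (∑' n, (a (n + 1) / (t - t₀)) ^ 2)
          = ∑' n, (a (n + 1)) ^ 2 * ((1:ℝ) / (t - t₀)^2) := by
            exact tsum_congr heq
        _ = (∑' n, (a (n + 1)) ^ 2) * ((1:ℝ) / (t - t₀)^2) := tsum_mul_right
        _ = (∑' n, (a (n + 1)) ^ 2) / (t - t₀) ^ 2 := by ring
  · intro s hs t ht hst
    have hE : ∀ u : ℝ, u ∈ Ici (0:ℝ) → (∑' n, (a (n + 1) / (u - t₀)) ^ 2)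
        = (∑' n, (a (n + 1)) ^ 2) / (u - t₀) ^ 2 := by
      intro u hu
      have heq : ∀ n : ℕ, (a (n + 1) / (u - t₀)) ^ 2 = (a (n + 1)) ^ 2 * ((1:ℝ) / (u - t₀)^2) := by
        intro n; field_simp
      calc (∑' n, (a (n + 1) / (u - t₀)) ^ 2)
          = ∑' n, (a (n + 1)) ^ 2 * ((1:ℝ) / (u - t₀)^2) := tsum_congr heq
        _ = (∑' n, (a (n + 1)) ^ 2) * ((1:ℝ) / (u - t₀)^2) := tsum_mul_right
        _ = (∑' n, (a (n + 1)) ^ 2) / (u - t₀) ^ 2 := by ring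
    simp only [hE s hs, hE t ht]
    have h1 : 0 < s - t₀ := hpos' s hs
    have h2 : 0 < t - t₀ := hpos' t ht
    have h3 : (s - t₀)^2 < (t - t₀)^2 := by nlinarith
    exact div_lt_div_of_pos_left hS (pow_pos h1 2) h3
  · refine ⟨(∑' n, (a (n + 1)) ^ 2) / t₀ ^ 2, ?_⟩
    intro t ht
    have heq : ∀ n : ℕ, (a (n + 1) / (t - t₀)) ^ 2 = (a (n + 1)) ^ 2 * ((1:ℝ) / (t - t₀)^2) := by
      intro n; field_simp
    have hE : (∑' n, (a (n + 1) / (t - t₀)) ^ 2) = (∑' n, (a (n + 1)) ^ 2) / (t - t₀) ^ 2 := by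
      calc (∑' n, (a (n + 1) / (t - t₀)) ^ 2)
          = ∑' n, (a (n + 1)) ^ 2 * ((1:ℝ) / (t - t₀)^2) := tsum_congr heq
        _ = (∑' n, (a (n + 1)) ^ 2) * ((1:ℝ) / (t - t₀)^2) := tsum_mul_right
        _ = (∑' n, (a (n + 1)) ^ 2) / (t - t₀) ^ 2 := by ring
    rw [hE]
    have h1 : 0 < t - t₀ := hpos' t ht
    have h2 : t₀ ^ 2 ≤ (t - t₀) ^ 2 := by nlinarith [mem_Ici.mp ht]
    have h0' : (0:ℝ) < t₀ ^ 2 := by nlinarith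
    exact div_le_div_of_nonneg_left hS.le h0' h2

end Stmt15
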